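/- For the n-draw game with decision numbers k_1 ≥ ... ≥ k_{n-1} ≥ k_n = 0, the win probability at round r satisfies PW(n,r) = PC(n,r-1)/(n-r+1) - k_r^n/n, where PC(n,r-1) is the probability the game continues past round r-1 (with PC(n,0)=1). -/

import Mathlib

open MeasureTheory Set

namespace WinProbAux

noncomputable def nu : Measure ℝ := volume.restrict (Set.Icc 0 1)

lemma nu_univ : nu Set.univ = 1 := by
  simp [nu, Real.volume_Icc]

instance : IsProbabilityMeasure nu := ⟨nu_univ⟩

lemma nu_singleton (x : ℝ) : nu {x} = 0 := by
  have h := Measure.le_iff'.1 (Measure.restrict_le_self (μ := (volume : Measure ℝ))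
    (s := Set.Icc (0:ℝ) 1)) {x}
  simpa [nu] using h

noncomputable def mu (n : ℕ) : Measure (Fin n → ℝ) := Measure.pi fun _ => nu

instance (n : ℕ) : IsProbabilityMeasure (mu n) := by
  unfold mu; infer_instance

lemma mu_rect {n : ℕ} {i j : Fin n} (hij : i ≠ j) {s t : Set ℝ} (hs : MeasurableSet s)
    (ht : MeasurableSet t) :
    mu n {a | a i ∈ s ∧ a j ∈ t} = nu s * nu t := by
  classical
  have hset : {a : Fin n → ℝ | a i ∈ s ∧ a j ∈ t}
      = Set.pi Set.univ (fun m => if m = i then s else if m = j then t else Set.univ) := by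
    ext a
    simp only [Set.mem_setOf_eq, Set.mem_pi, Set.mem_univ, forall_true_left]
    constructor
    · rintro ⟨h1, h2⟩ m
      by_cases hmi : m = i
      · subst hmi; simp [h1]
      · by_cases hmj : m = j
        · subst hmj; simp [hmi, h2]
        · simp [hmi, hmj]
    · intro h
      refine ⟨?_, ?_⟩
      · have := h i; simpa using this
      · have := h j; simpa [hij.symm] using this
  rw [hset, mu, Measure.pi_pi]
  have : ∀ m : Fin n, m ∉ ({i, j} : Finset (Fin n)) →
      nu (if m = i then s else if m = j then t else Set.univ) = 1 := by
    intro m hm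
    simp only [Finset.mem_insert, Finset.mem_singleton, not_or] at hm
    simp [hm.1, hm.2, nu_univ]
  rw [← Finset.prod_subset (Finset.subset_univ ({i, j} : Finset (Fin n)))
    (fun m _ hm => this m hm)]
  rw [Finset.prod_pair hij]
  simp [hij.symm]

lemma mu_ties {n : ℕ} {i j : Fin n} (hij : i ≠ j) : mu n {a | a i = a j} = 0 := by
  have hT : Measurable (fun a : Fin n → ℝ => (a i, a j)) :=
    (measurable_pi_apply i).prodMk (measurable_pi_apply j)
  have hdiag : MeasurableSet {p : ℝ × ℝ | p.1 = p.2} :=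
    measurableSet_eq_fun measurable_fst measurable_snd
  have hmap : Measure.map (fun a : Fin n → ℝ => (a i, a j)) (mu n) = nu.prod nu := by
    refine (Measure.prod_eq (μ := nu) (ν := nu) fun s t hs ht => ?_).symm
    rw [Measure.map_apply hT (hs.prod ht)]
    have : (fun a : Fin n → ℝ => (a i, a j)) ⁻¹' (s ×ˢ t) = {a | a i ∈ s ∧ a j ∈ t} := rfl
    rw [this, mu_rect hij hs ht]
  have : mu n {a | a i = a j}
      = Measure.map (fun a : Fin n → ℝ => (a i, a j)) (mu n) {p : ℝ × ℝ | p.1 = p.2} := by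
    rw [Measure.map_apply hT hdiag]; rfl
  rw [this, hmap, Measure.prod_apply hdiag]
  simp [Set.preimage, nu_singleton, eq_comm]

lemma mu_perm {n : ℕ} (σ : Equiv.Perm (Fin n)) {S : Set (Fin n → ℝ)} (hS : MeasurableSet S) :
    mu n ((fun a => a ∘ σ) ⁻¹' S) = mu n S := by
  have hmp := measurePreserving_piCongrLeft (fun _ : Fin n => nu) σ.symm
  have hcoe : ⇑(MeasurableEquiv.piCongrLeft (fun _ : Fin n => ℝ) σ.symm)
      = fun a => a ∘ σ := by
    funext a
    funext b
    rw [MeasurableEquiv.coe_piCongrLeft]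
    have : b = σ.symm (σ b) := by simp
    rw [this, Equiv.piCongrLeft_apply_apply]
    simp
  have := hmp.measure_preimage (μa := Measure.pi fun _ => nu) hS.nullMeasurableSet
  rw [hcoe] at this
  exact this

lemma mu_box {n : ℕ} {c : ℝ} (h1 : c ≤ 1) :
    mu n {a | ∀ i, a i < c} = ENNReal.ofReal c ^ n := by
  have hs : {a : Fin n → ℝ | ∀ i, a i < c} = Set.pi Set.univ (fun _ => Set.Iio c) := by
    ext a; simp
  rw [hs, mu, Measure.pi_pi]
  have hnu : nu (Set.Iio c) = ENNReal.ofReal c := by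
    rw [nu, Measure.restrict_apply measurableSet_Iio]
    have : Set.Iio c ∩ Set.Icc 0 1 = Set.Ico 0 c := by
      ext x
      simp only [Set.mem_inter_iff, Set.mem_Iio, Set.mem_Icc, Set.mem_Ico]
      constructor
      · rintro ⟨h, h2, _⟩; exact ⟨h2, h⟩
      · rintro ⟨h2, h⟩; exact ⟨h, h2, le_trans (le_of_lt h) h1⟩
    rw [this, Real.volume_Ico]; simp
  simp [hnu]

lemma Emax_measurable {n : ℕ} (c : ℝ) (m : Fin n) :
    MeasurableSet {a : Fin n → ℝ | (∀ i, a i ≤ a m) ∧ a m < c} := by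
  have h1 : MeasurableSet {a : Fin n → ℝ | ∀ i, a i ≤ a m} := by
    have : {a : Fin n → ℝ | ∀ i, a i ≤ a m} = ⋂ i, {a | a i ≤ a m} := by
      ext a; simp
    rw [this]
    exact MeasurableSet.iInter fun i =>
      measurableSet_le (measurable_pi_apply i) (measurable_pi_apply m)
  have h2 : MeasurableSet {a : Fin n → ℝ | a m < c} :=
    measurableSet_lt (measurable_pi_apply m) measurable_const
  exact h1.inter h2

lemma mu_Emax {n : ℕ} (hn : 1 ≤ n) {c : ℝ} (h1 : c ≤ 1) (m : Fin n) :
    mu n {a | (∀ i, a i ≤ a m) ∧ a m < c} = ENNReal.ofReal c ^ n / n := by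
  classical
  set G : Fin n → Set (Fin n → ℝ) := fun m' => {a | (∀ i, a i ≤ a m') ∧ a m' < c} with hG
  have hGmeas : ∀ m', MeasurableSet (G m') := fun m' => Emax_measurable c m'
  -- all G m' have the same measure
  have hsym : ∀ m', mu n (G m') = mu n (G m) := by
    intro m'
    have hpre : (fun a : Fin n → ℝ => a ∘ (Equiv.swap m m')) ⁻¹' (G m') = G m := by
      ext a
      simp only [hG, Set.mem_preimage, Set.mem_setOf_eq, Function.comp_apply,
        Equiv.swap_apply_right]
      constructor
      · rintro ⟨h1', h2⟩
        refine ⟨fun i => ?_, h2⟩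
        have := h1' (Equiv.swap m m' i)
        simpa using this
      · rintro ⟨h1', h2⟩
        exact ⟨fun i => h1' _, h2⟩
    rw [← mu_perm (Equiv.swap m m') (hGmeas m'), hpre]
  -- union over all m' is the box
  have hunion : (⋃ m' ∈ Finset.univ, G m') = {a : Fin n → ℝ | ∀ i, a i < c} := by
    ext a
    simp only [Finset.mem_univ, Set.iUnion_true, Set.mem_iUnion, hG, Set.mem_setOf_eq]
    constructor
    · rintro ⟨m', h1', h2⟩ i; exact lt_of_le_of_lt (h1' i) h2
    · intro h
      obtain ⟨m₀, -, hm₀⟩ := Finset.exists_max_image Finset.univ a ⟨⟨0, hn⟩, Finset.mem_univ _⟩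
      exact ⟨m₀, fun i => hm₀ i (Finset.mem_univ i), h m₀⟩
  have hdisj : Set.Pairwise (↑(Finset.univ : Finset (Fin n))) (Function.onFun (AEDisjoint (mu n)) G) := by
    intro m1 _ m2 _ h12
    refine measure_mono_null (fun a ha => ?_) (mu_ties h12)
    simp only [hG, Set.mem_inter_iff, Set.mem_setOf_eq] at ha
    exact le_antisymm (ha.2.1 m1) (ha.1.1 m2)
  have hsum : ∑ m' : Fin n, mu n (G m') = ENNReal.ofReal c ^ n := by
    rw [← measure_biUnion_finset₀ hdisj (fun m' _ => (hGmeas m').nullMeasurableSet), hunion,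
      mu_box h1]
  rw [Finset.sum_congr rfl (fun m' _ => hsym m')] at hsum
  simp only [Finset.sum_const, Finset.card_univ, Fintype.card_fin, nsmul_eq_mul] at hsum
  rw [ENNReal.eq_div_iff (Nat.cast_ne_zero.mpr (by omega)) (ENNReal.natCast_ne_top n)]
  exact hsum

lemma mu_CE {n r : ℕ} (k : Fin n → ℝ) {p m : Fin n} (hp : (p : ℕ) = r - 1)
    (hm : r - 1 ≤ (m : ℕ))
    (hC : MeasurableSet ({a : Fin n → ℝ |
        ∀ j : Fin n, (j : ℕ) < r - 1 → a j < k j ∧ ∃ i, j < i ∧ a j < a i}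
      ∩ {a | ∀ i, a i ≤ a p})) :
    mu n ({a : Fin n → ℝ | ∀ j : Fin n, (j : ℕ) < r - 1 → a j < k j ∧ ∃ i, j < i ∧ a j < a i}
        ∩ {a | ∀ i, a i ≤ a m})
      = mu n ({a : Fin n → ℝ | ∀ j : Fin n, (j : ℕ) < r - 1 → a j < k j ∧ ∃ i, j < i ∧ a j < a i}
        ∩ {a | ∀ i, a i ≤ a p}) := by
  classical
  have hσj : ∀ j : Fin n, (j : ℕ) < r - 1 → Equiv.swap p m j = j := by
    intro j hj
    exact Equiv.swap_apply_of_ne_of_ne (Fin.ne_of_val_ne (by omega)) (Fin.ne_of_val_ne (by omega))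
  have hσlt : ∀ j i : Fin n, (j : ℕ) < r - 1 → j < i → j < Equiv.swap p m i := by
    intro j i hj hji
    rcases eq_or_ne i p with rfl | hip
    · rw [Equiv.swap_apply_left]; exact Fin.lt_def.mpr (by omega)
    · rcases eq_or_ne i m with rfl | him
      · rw [Equiv.swap_apply_right]; exact Fin.lt_def.mpr (by omega)
      · rw [Equiv.swap_apply_of_ne_of_ne hip him]; exact hji
  have hpre : (fun a : Fin n → ℝ => a ∘ (Equiv.swap p m)) ⁻¹'
      ({a : Fin n → ℝ | ∀ j : Fin n, (j : ℕ) < r - 1 → a j < k j ∧ ∃ i, j < i ∧ a j < a i}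
        ∩ {a | ∀ i, a i ≤ a p})
      = {a : Fin n → ℝ | ∀ j : Fin n, (j : ℕ) < r - 1 → a j < k j ∧ ∃ i, j < i ∧ a j < a i}
        ∩ {a | ∀ i, a i ≤ a m} := by
    ext a
    simp only [Set.mem_preimage, Set.mem_inter_iff, Set.mem_setOf_eq, Function.comp_apply]
    constructor
    · rintro ⟨h1, h2⟩
      refine ⟨fun j hj => ?_, fun i => ?_⟩
      · obtain ⟨hk', i, hi, hlt'⟩ := h1 j hj
        rw [hσj j hj] at hk' hlt'
        exact ⟨hk', Equiv.swap p m i, hσlt j i hj hi, hlt'⟩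
      · have := h2 (Equiv.swap p m i)
        simpa [Equiv.swap_apply_self, Equiv.swap_apply_left] using this
    · rintro ⟨h1, h2⟩
      refine ⟨fun j hj => ?_, fun i => ?_⟩
      · obtain ⟨hk', i, hi, hlt'⟩ := h1 j hj
        rw [hσj j hj]
        refine ⟨hk', Equiv.swap p m i, hσlt j i hj hi, ?_⟩
        simpa [Equiv.swap_apply_self] using hlt'
      · rw [Equiv.swap_apply_left]
        exact h2 (Equiv.swap p m i)
  rw [← mu_perm (Equiv.swap p m) hC, hpre]

end WinProbAux

open WinProbAux

/-- For the `n`-draw game with nonincreasing decision numbers `1 ≥ k₁ ≥ … ≥ k_n = 0`, the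
win probability at round `r` equals `PC(n,r-1)/(n-r+1) - k_r^n/n`, where `PC(n,r-1)` is the
probability that the game continues past round `r-1` (each earlier draw was below its
decision number and below the maximum of the remaining draws), with `PC(n,0) = 1`. -/
theorem win_prob_eq_continuation_div (n : ℕ) (hn : 1 ≤ n) (k : Fin n → ℝ)
    (hk0 : ∀ j, 0 ≤ k j) (hk1 : ∀ j, k j ≤ 1) (hmono : ∀ i j : Fin n, i ≤ j → k j ≤ k i)
    (hlast : k ⟨n - 1, by omega⟩ = 0) (r : ℕ) (hr1 : 1 ≤ r) (hr2 : r ≤ n) :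
    (Measure.pi fun _ : Fin n => (volume : Measure ℝ).restrict (Set.Icc 0 1))
      {a | (∀ j : Fin n, (j : ℕ) < r - 1 → a j < k j ∧ ∃ i, j < i ∧ a j < a i) ∧
        k ⟨r - 1, by omega⟩ ≤ a ⟨r - 1, by omega⟩ ∧ ∀ i, a i ≤ a ⟨r - 1, by omega⟩}
      = (Measure.pi fun _ : Fin n => (volume : Measure ℝ).restrict (Set.Icc 0 1))
          {a | ∀ j : Fin n, (j : ℕ) < r - 1 → a j < k j ∧ ∃ i, j < i ∧ a j < a i}
          / ((n - r + 1 : ℕ) : ENNReal)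
        - ENNReal.ofReal (k ⟨r - 1, by omega⟩ ^ n / n) := by
  classical
  have hμ : (Measure.pi fun _ : Fin n => (volume : Measure ℝ).restrict (Set.Icc 0 1))
      = WinProbAux.mu n := rfl
  rw [hμ]
  have hrn : r - 1 < n := by omega
  set p : Fin n := ⟨r - 1, hrn⟩ with hpdef
  have hpval : (p : ℕ) = r - 1 := rfl
  set c : ℝ := k p with hcdef
  set C : Set (Fin n → ℝ) :=
    {a | ∀ j : Fin n, (j : ℕ) < r - 1 → a j < k j ∧ ∃ i, j < i ∧ a j < a i} with hCdef
  set E : Fin n → Set (Fin n → ℝ) := fun m => {a | ∀ i, a i ≤ a m} with hEdef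
  -- measurability
  have hCmeas : MeasurableSet C := by
    have : C = ⋂ j : Fin n, ⋂ (_ : (j : ℕ) < r - 1),
        ({a : Fin n → ℝ | a j < k j} ∩ ⋃ i : Fin n, ⋃ (_ : j < i), {a | a j < a i}) := by
      ext a
      simp only [hCdef, Set.mem_iInter, Set.mem_setOf_eq, Set.mem_inter_iff, Set.mem_iUnion]
      constructor
      · intro h j hj
        obtain ⟨h1, i, hi, h2⟩ := h j hj
        exact ⟨h1, i, hi, h2⟩
      · intro h j hj
        obtain ⟨h1, i, hi, h2⟩ := h j hj
        exact ⟨h1, i, hi, h2⟩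
    rw [this]
    exact MeasurableSet.iInter fun j => MeasurableSet.iInter fun _ =>
      ((measurableSet_lt (measurable_pi_apply j) measurable_const).inter
        (MeasurableSet.iUnion fun i => MeasurableSet.iUnion fun _ =>
          measurableSet_lt (measurable_pi_apply j) (measurable_pi_apply i)))
  have hEmeas : ∀ m : Fin n, MeasurableSet (E m) := by
    intro m
    have : E m = ⋂ i, {a : Fin n → ℝ | a i ≤ a m} := by ext a; simp [hEdef]
    rw [this]
    exact MeasurableSet.iInter fun i =>
      measurableSet_le (measurable_pi_apply i) (measurable_pi_apply m)
  set W : Set (Fin n → ℝ) := C ∩ (E p ∩ {a | c ≤ a p}) with hWdef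
  set F : Set (Fin n → ℝ) := C ∩ (E p ∩ {a | a p < c}) with hFdef
  have hFmeas : MeasurableSet F :=
    hCmeas.inter ((hEmeas p).inter (measurableSet_lt (measurable_pi_apply p) measurable_const))
  -- the goal's win set is W
  have hgoalset : {a : Fin n → ℝ | (∀ j : Fin n, (j : ℕ) < r - 1 →
        a j < k j ∧ ∃ i, j < i ∧ a j < a i) ∧
        k ⟨r - 1, by omega⟩ ≤ a ⟨r - 1, by omega⟩ ∧ ∀ i, a i ≤ a ⟨r - 1, by omega⟩} = W := by
    ext a
    constructor
    · rintro ⟨h1, h2, h3⟩; exact ⟨h1, h3, h2⟩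
    · rintro ⟨h1, h2, h3⟩; exact ⟨h1, h3, h2⟩
  rw [hgoalset]
  -- split C ∩ E p into W and F
  have hWF : C ∩ E p = W ∪ F := by
    ext a
    simp only [hWdef, hFdef, Set.mem_inter_iff, Set.mem_union, Set.mem_setOf_eq]
    rcases le_or_gt c (a p) with h | h <;> tauto
  have hdisj : Disjoint W F := by
    rw [Set.disjoint_left]
    intro a haW haF
    have h1 : c ≤ a p := haW.2.2
    have h2 : a p < c := haF.2.2
    exact absurd h2 (not_lt.mpr h1)
  have hsplit : mu n (C ∩ E p) = mu n W + mu n F := by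
    rw [hWF, measure_union hdisj hFmeas]
  -- partition of C by argmax location
  set S : Finset (Fin n) := Finset.univ.filter (fun m : Fin n => r - 1 ≤ (m : ℕ)) with hSdef
  have hcard : S.card = n - r + 1 := by
    have himg : S.image Fin.val = Finset.Ico (r - 1) n := by
      ext x
      simp only [hSdef, Finset.mem_image, Finset.mem_filter, Finset.mem_univ, true_and,
        Finset.mem_Ico]
      constructor
      · rintro ⟨m, hm, rfl⟩; exact ⟨hm, m.isLt⟩
      · rintro ⟨h1, h2⟩; exact ⟨⟨x, h2⟩, h1, rfl⟩
    have := congrArg Finset.card himg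
    rw [Finset.card_image_of_injective _ Fin.val_injective, Nat.card_Ico] at this
    omega
  have hsubC : C ⊆ ⋃ m ∈ S, E m := by
    intro a ha
    obtain ⟨m₀, -, hm₀⟩ := Finset.exists_max_image Finset.univ a ⟨⟨0, by omega⟩, Finset.mem_univ _⟩
    have hmax : ∀ i, a i ≤ a m₀ := fun i => hm₀ i (Finset.mem_univ i)
    have hm₀S : m₀ ∈ S := by
      simp only [hSdef, Finset.mem_filter, Finset.mem_univ, true_and]
      by_contra hlt
      push_neg at hlt
      obtain ⟨-, i, -, hi2⟩ := ha m₀ hlt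
      exact absurd hi2 (not_lt.mpr (hmax i))
    exact Set.mem_biUnion hm₀S hmax
  have hCunion : (⋃ m ∈ S, C ∩ E m) = C := by
    apply Set.Subset.antisymm
    · exact Set.iUnion₂_subset fun m _ => Set.inter_subset_left
    · intro a ha
      obtain ⟨m, hm, hEm⟩ := Set.mem_iUnion₂.mp (hsubC ha)
      exact Set.mem_biUnion hm ⟨ha, hEm⟩
  have hAED : Set.Pairwise (↑S) (Function.onFun (AEDisjoint (mu n)) fun m => C ∩ E m) := by
    intro m1 _ m2 _ h12
    refine measure_mono_null (fun a ha => ?_) (mu_ties h12)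
    obtain ⟨⟨-, h1⟩, -, h2⟩ := ha
    exact le_antisymm (h2 m1) (h1 m2)
  have hsum : ∑ m ∈ S, mu n (C ∩ E m) = mu n C := by
    rw [← measure_biUnion_finset₀ hAED
      (fun m _ => (hCmeas.inter (hEmeas m)).nullMeasurableSet), hCunion]
  have heach : ∀ m ∈ S, mu n (C ∩ E m) = mu n (C ∩ E p) := fun m hm =>
    mu_CE k hpval (Finset.mem_filter.mp hm).2 (hCmeas.inter (hEmeas p))
  have hkey : mu n C = (S.card : ℕ) • mu n (C ∩ E p) := by
    rw [← hsum, Finset.sum_congr rfl heach, Finset.sum_const]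
  have hne0 : ((n - r + 1 : ℕ) : ENNReal) ≠ 0 := Nat.cast_ne_zero.mpr (by omega)
  have hCEp : mu n (C ∩ E p) = mu n C / ((n - r + 1 : ℕ) : ENNReal) := by
    rw [ENNReal.eq_div_iff hne0 (ENNReal.natCast_ne_top _)]
    rw [hkey, hcard, nsmul_eq_mul]
  -- false-negative measure
  have hF : mu n F = ENNReal.ofReal (c ^ n / n) := by
    set G : Set (Fin n → ℝ) := {a | (∀ i, a i ≤ a p) ∧ a p < c} with hGdef
    set N : Set (Fin n → ℝ) := ⋃ j : Fin n, {a | (j : ℕ) < r - 1 ∧ a j = a p} with hNdef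
    have hNnull : mu n N = 0 := by
      refine measure_iUnion_null fun j => ?_
      by_cases hj : (j : ℕ) < r - 1
      · refine measure_mono_null (fun a ha => ha.2) (mu_ties (Fin.ne_of_val_ne ?_))
        omega
      · have : {a : Fin n → ℝ | (j : ℕ) < r - 1 ∧ a j = a p} = ∅ := by
          ext a; simp [hj]
        rw [this]; exact measure_empty
    have hFG : F ⊆ G := by
      rintro a ⟨-, h1, h2⟩; exact ⟨h1, h2⟩
    have hGFN : G ⊆ F ∪ N := by
      rintro a ⟨h1, h2⟩
      by_cases hN : ∃ j : Fin n, (j : ℕ) < r - 1 ∧ a j = a p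
      · right
        obtain ⟨j, hj1, hj2⟩ := hN
        exact Set.mem_iUnion.mpr ⟨j, hj1, hj2⟩
      · left
        push_neg at hN
        refine ⟨fun j hj => ?_, h1, h2⟩
        have hjp : j ≤ p := by
          rw [Fin.le_def]; simp only [hpval]; omega
        refine ⟨lt_of_le_of_lt (h1 j) (lt_of_lt_of_le h2 (hmono j p hjp)), p, ?_, ?_⟩
        · rw [Fin.lt_def]; simp only [hpval]; omega
        · exact lt_of_le_of_ne (h1 j) (hN j hj)
    have hFGeq : mu n F = mu n G := by
      apply le_antisymm (measure_mono hFG)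
      calc mu n G ≤ mu n (F ∪ N) := measure_mono hGFN
        _ ≤ mu n F + mu n N := measure_union_le _ _
        _ = mu n F := by rw [hNnull, add_zero]
    rw [hFGeq, hGdef]
    rw [mu_Emax hn (hk1 p) p]
    rw [ENNReal.ofReal_div_of_pos (by exact_mod_cast Nat.pos_of_ne_zero (by omega)),
      ENNReal.ofReal_pow (hk0 p), ENNReal.ofReal_natCast]
  -- final assembly
  have hfinal : mu n W = mu n C / ((n - r + 1 : ℕ) : ENNReal) - ENNReal.ofReal (c ^ n / n) := by
    rw [← hCEp, ← hF]
    exact ENNReal.eq_sub_of_add_eq (measure_ne_top _ _) hsplit.symm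
  exact hfinal
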